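/- Let n ≥ 2 and let G = F_n × ℤ be the direct product of the free group of rank n with the infinite cyclic group. Then every finitely generated subgroup H of G is undistorted in G. -/

import Mathlib

/-- The word length of `g` with respect to a generating set `S`: the least `n ≥ 0`
such that `g` is a product of `n` elements of `S ∪ S⁻¹`. -/
noncomputable def wordLength {G : Type*} [Group G] (S : Set G) (g : G) : ℕ :=
  sInf {n : ℕ | ∃ l : List G, (∀ x ∈ l, x ∈ S ∨ x⁻¹ ∈ S) ∧ l.length = n ∧ l.prod = g}

open FreeGroup List

variable {α : Type*} [DecidableEq α]

theorem reduced_no_pattern {L A B : List (α × Bool)} {x : α} {b : Bool}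
    (hL : FreeGroup.reduce L = L) (h : L = A ++ (x, b) :: (x, !b) :: B) : False :=
  FreeGroup.reduce.not (p := False) (hL.trans h)

theorem exists_pattern_of_not_reduced {M : List (α × Bool)} (h : FreeGroup.reduce M ≠ M) :
    ∃ (A B : List (α × Bool)) (x : α) (b : Bool), M = A ++ (x, b) :: (x, !b) :: B := by
  have hr : FreeGroup.Red M (FreeGroup.reduce M) := FreeGroup.reduce.red
  rcases (Relation.reflTransGen_iff_eq_or_transGen.mp hr) with he | ht
  · exact absurd he.symm (fun e => h e.symm)
  · obtain ⟨X, hstep, -⟩ := Relation.TransGen.head'_iff.mp ht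
    cases hstep with
    | @not A B x b => exact ⟨A, B, x, b, rfl⟩

/-- a prefix of a reduced word is reduced -/
theorem reduced_of_append_left {M N : List (α × Bool)}
    (h : FreeGroup.reduce (M ++ N) = M ++ N) : FreeGroup.reduce M = M := by
  by_contra hM
  obtain ⟨A, B, x, b, rfl⟩ := exists_pattern_of_not_reduced hM
  exact reduced_no_pattern h (by rw [List.append_assoc]; rfl)

theorem reduced_of_append_right {M N : List (α × Bool)}
    (h : FreeGroup.reduce (M ++ N) = M ++ N) : FreeGroup.reduce N = N := by
  by_contra hN
  obtain ⟨A, B, x, b, rfl⟩ := exists_pattern_of_not_reduced hN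
  exact reduced_no_pattern h (by rw [← List.append_assoc])

theorem reduced_append {M N : List (α × Bool)} (hM : FreeGroup.reduce M = M)
    (hN : FreeGroup.reduce N = N)
    (hj : ∀ x b, M.getLast? = some (x, b) → N.head? ≠ some (x, !b)) :
    FreeGroup.reduce (M ++ N) = M ++ N := by
  by_contra hMN
  obtain ⟨A, B, x, b, hpat⟩ := exists_pattern_of_not_reduced hMN
  rcases List.append_eq_append_iff.mp hpat with ⟨a', hA, hNP⟩ | ⟨c', hM', hP⟩
  · exact reduced_no_pattern hN hNP
  · match c', hP with
    | [], hP => exact reduced_no_pattern hN (show N = [] ++ _ by simpa using hP.symm)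
    | [u], hP =>
      obtain ⟨rfl, rfl⟩ : u = (x, b) ∧ N = (x, !b) :: B := by
        have := hP.symm; simp at this; tauto
      exact hj x b (by rw [hM']; simp) (by simp)
    | u :: v :: rest, hP =>
      have h1 : u = (x, b) ∧ v = (x, !b) := by
        have := hP.symm; simp at this; tauto
      exact reduced_no_pattern hM (by rw [hM', h1.1, h1.2])

theorem junction_list (L1 : List (α × Bool)) : ∀ (L2 : List (α × Bool)),
    FreeGroup.reduce L1 = L1 → FreeGroup.reduce L2 = L2 →
    ∃ p c q, L1 = p ++ c ∧ L2 = FreeGroup.invRev c ++ q ∧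
      FreeGroup.reduce (L1 ++ L2) = p ++ q := by
  induction L1 using List.reverseRecOn with
  | nil =>
    intro L2 _ h2
    exact ⟨[], [], L2, by simp [FreeGroup.invRev], by simpa using h2⟩
  | append_singleton l a ih =>
    intro L2 h1 h2
    match L2 with
    | [] =>
      exact ⟨l ++ [a], [], [], by simp [FreeGroup.invRev], by simpa using h1⟩
    | u :: L2' =>
      by_cases hu : u = (a.1, !a.2)
      · have hl : FreeGroup.reduce l = l := reduced_of_append_left h1
        have hL2' : FreeGroup.reduce L2' = L2' :=
          reduced_of_append_right (M := [u]) h2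
        obtain ⟨p, c, q, e1, e2, e3⟩ := ih L2' hl hL2'
        refine ⟨p, c ++ [a], q, by rw [← List.append_assoc, ← e1], ?_, ?_⟩
        · subst hu
          simpa [FreeGroup.invRev] using e2
        · have hstep : FreeGroup.Red.Step ((l ++ [a]) ++ u :: L2') (l ++ L2') := by
            subst hu
            have : (l ++ [a]) ++ (a.1, !a.2) :: L2' = l ++ (a.1, a.2) :: (a.1, !a.2) :: L2' := by
              simp
            rw [this]
            exact FreeGroup.Red.Step.not
          rw [FreeGroup.reduce.Step.eq hstep, e3]
      · refine ⟨l ++ [a], [], u :: L2', by simp [FreeGroup.invRev],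
          by simp [FreeGroup.invRev], ?_⟩
        refine reduced_append h1 h2 ?_
        intro y c hlast hhead
        simp at hlast hhead
        apply hu
        rw [hhead, hlast]

theorem junction_group (x y : FreeGroup α) :
    ∃ p c q, x.toWord = p ++ c ∧ y.toWord = FreeGroup.invRev c ++ q ∧
      (x * y).toWord = p ++ q := by
  obtain ⟨p, c, q, h1, h2, h3⟩ :=
    junction_list x.toWord y.toWord (FreeGroup.reduce_toWord x) (FreeGroup.reduce_toWord y)
  refine ⟨p, c, q, h1, h2, ?_⟩
  have : x * y = FreeGroup.mk (x.toWord ++ y.toWord) := by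
    rw [← FreeGroup.mul_mk, FreeGroup.mk_toWord, FreeGroup.mk_toWord]
  rw [this, FreeGroup.toWord_mk, h3]

/-- all prefixes of reduced words of generators (and their inverses), plus 1 -/
def gpPrefixes (s : Set (FreeGroup α)) : Set (FreeGroup α) :=
  insert 1 {t | ∃ b, (b ∈ s ∨ b⁻¹ ∈ s) ∧ ∃ i, t = FreeGroup.mk ((FreeGroup.toWord b).take i)}

theorem gpPrefixes_finite {s : Set (FreeGroup α)} (hs : s.Finite) :
    (gpPrefixes s).Finite := by
  have : gpPrefixes s ⊆ insert 1
      (⋃ b ∈ s ∪ s⁻¹, (fun i => FreeGroup.mk ((FreeGroup.toWord b).take i)) ''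
        Set.Iic (FreeGroup.toWord b).length) := by
    rintro t (rfl | ⟨b, hb, i, rfl⟩)
    · exact Set.mem_insert _ _
    · refine Set.mem_insert_of_mem _ ?_
      refine Set.mem_biUnion (show b ∈ s ∪ s⁻¹ by
        rcases hb with hb | hb
        · exact Or.inl hb
        · exact Or.inr (by simpa using hb)) ?_
      refine ⟨min i (FreeGroup.toWord b).length, by simp, ?_⟩
      dsimp only
      congr 1
      rw [List.take_eq_take_iff]
      omega
  refine Set.Finite.subset ?_ this
  refine Set.Finite.insert _ (Set.Finite.biUnion (hs.union hs.inv) ?_)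
  intro b _
  exact (Set.finite_Iic _).image _

theorem one_mem_gpPrefixes (s : Set (FreeGroup α)) : (1 : FreeGroup α) ∈ gpPrefixes s :=
  Set.mem_insert _ _

theorem prefix_coset (s : Set (FreeGroup α)) {h : FreeGroup α}
    (hh : h ∈ Subgroup.closure s) (i : ℕ) :
    ∃ t ∈ gpPrefixes s, FreeGroup.mk ((FreeGroup.toWord h).take i) * t⁻¹ ∈
      Subgroup.closure s := by
  have hh' : h ∈ Submonoid.closure (s ∪ s⁻¹) := by
    rw [← Subgroup.closure_toSubmonoid]; exact hh
  obtain ⟨l, hl, rfl⟩ := Submonoid.exists_list_of_mem_closure hh'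
  clear hh hh'
  induction l using List.reverseRecOn generalizing i with
  | nil =>
    refine ⟨1, one_mem_gpPrefixes s, ?_⟩
    simp [FreeGroup.toWord_one, FreeGroup.one_eq_mk]
    exact Subgroup.one_mem _
  | append_singleton l b ih =>
    have hl' : ∀ y ∈ l, y ∈ s ∪ s⁻¹ := fun y hy => hl y (List.mem_append_left _ hy)
    have hb : b ∈ s ∪ s⁻¹ := hl b (List.mem_append_right _ (List.mem_singleton_self b))
    have hx : l.prod ∈ Subgroup.closure s := by
      refine list_prod_mem (fun y hy => ?_)
      rcases hl' y hy with h | h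
      · exact Subgroup.subset_closure h
      · rw [show y = (y⁻¹)⁻¹ by simp]
        exact Subgroup.inv_mem _ (Subgroup.subset_closure (by simpa using h))
    obtain ⟨p, c, q, e1, e2, e3⟩ := junction_group l.prod b
    rw [List.prod_append, List.prod_singleton]
    by_cases hi : i ≤ p.length
    · obtain ⟨t, ht, hmem⟩ := ih i hl'
      refine ⟨t, ht, ?_⟩
      rw [e3, List.take_append_of_le_length hi]
      rwa [e1, List.take_append_of_le_length hi] at hmem
    · push_neg at hi
      set j := i - p.length with hj
      refine ⟨FreeGroup.mk ((FreeGroup.toWord b).take (c.length + j)), ?_, ?_⟩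
      · refine Set.mem_insert_of_mem _ ⟨b, ?_, _, rfl⟩
        rcases hb with h | h
        · exact Or.inl h
        · exact Or.inr (by simpa using h)
      · have hi' : i = p.length + j := by omega
        rw [e3, hi', List.take_length_add_append]
        have hc : (FreeGroup.toWord b).take (c.length + j)
            = FreeGroup.invRev c ++ q.take j := by
          rw [e2, show c.length = (FreeGroup.invRev c).length by simp, List.take_length_add_append]
        rw [hc]
        have e1' : l.prod = FreeGroup.mk p * FreeGroup.mk c := by
          rw [FreeGroup.mul_mk, ← e1, FreeGroup.mk_toWord]
        have : FreeGroup.mk (p ++ q.take j) *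
            (FreeGroup.mk (FreeGroup.invRev c ++ q.take j))⁻¹ = l.prod := by
          rw [← FreeGroup.mul_mk, ← FreeGroup.mul_mk,
            show FreeGroup.mk (FreeGroup.invRev c) = (FreeGroup.mk c)⁻¹ from
              (FreeGroup.inv_mk).symm, e1']
          group
        rw [this]
        exact hx

section WordLength

variable {G : Type*} [Group G] {A : Set G} {g x y : G}

theorem wordLength_le {l : List G} (hl : ∀ x ∈ l, x ∈ A ∨ x⁻¹ ∈ A) (hp : l.prod = g) :
    wordLength A g ≤ l.length :=
  Nat.sInf_le ⟨l, hl, rfl, hp⟩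

theorem exists_wordLength_rep (hg : g ∈ Subgroup.closure A) :
    ∃ l : List G, (∀ x ∈ l, x ∈ A ∨ x⁻¹ ∈ A) ∧ l.length = wordLength A g ∧ l.prod = g := by
  have hg' : g ∈ Submonoid.closure (A ∪ A⁻¹) := by
    rw [← Subgroup.closure_toSubmonoid]; exact hg
  obtain ⟨l, hl, hp⟩ := Submonoid.exists_list_of_mem_closure hg'
  have hl' : ∀ x ∈ l, x ∈ A ∨ x⁻¹ ∈ A := by
    intro x hx
    rcases hl x hx with h | h
    · exact Or.inl h
    · exact Or.inr (by simpa using h)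
  have hne : {n : ℕ | ∃ l : List G, (∀ x ∈ l, x ∈ A ∨ x⁻¹ ∈ A) ∧ l.length = n ∧ l.prod = g}.Nonempty :=
    ⟨l.length, l, hl', rfl, hp⟩
  obtain ⟨l', h1, h2, h3⟩ := Nat.sInf_mem hne
  exact ⟨l', h1, h2, h3⟩

theorem wordLength_mul_le (hx : x ∈ Subgroup.closure A) (hy : y ∈ Subgroup.closure A) :
    wordLength A (x * y) ≤ wordLength A x + wordLength A y := by
  obtain ⟨l1, a1, b1, c1⟩ := exists_wordLength_rep hx
  obtain ⟨l2, a2, b2, c2⟩ := exists_wordLength_rep hy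
  have := wordLength_le (l := l1 ++ l2) (g := x * y)
    (fun z hz => (List.mem_append.mp hz).elim (a1 z) (a2 z))
    (by rw [List.prod_append, c1, c2])
  simpa [b1, b2] using this

theorem wordLength_listprod_le (l : List G) (h : ∀ x ∈ l, x ∈ Subgroup.closure A) :
    wordLength A l.prod ≤ (l.map (wordLength A)).sum := by
  induction l with
  | nil =>
    have : wordLength A (1 : G) ≤ ([] : List G).length := wordLength_le (by simp) (by simp)
    simpa using this
  | cons a l ih =>
    rw [List.prod_cons, List.map_cons, List.sum_cons]
    calc wordLength A (a * l.prod) ≤ wordLength A a + wordLength A l.prod :=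
          wordLength_mul_le (h a List.mem_cons_self)
            (Subgroup.list_prod_mem _ (fun x hx => h x (List.mem_cons_of_mem _ hx)))
      _ ≤ _ := by
          have := ih (fun x hx => h x (List.mem_cons_of_mem _ hx))
          omega

end WordLength

/-- subadditive ℕ-valued functions on groups are bounded on products -/
theorem subadd_listprod {G : Type*} [Group G] (ν : G → ℕ) (h0 : ν 1 = 0)
    (hmul : ∀ x y, ν (x * y) ≤ ν x + ν y) (l : List G) :
    ν l.prod ≤ (l.map ν).sum := by
  induction l with
  | nil => simpa using Nat.le_of_eq h0
  | cons a l ih =>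
    rw [List.prod_cons, List.map_cons, List.sum_cons]
    calc ν (a * l.prod) ≤ ν a + ν l.prod := hmul _ _
      _ ≤ ν a + (l.map ν).sum := by omega

theorem map_sum_le {G : Type*} (ν : G → ℕ) {l : List G} {K : ℕ} (h : ∀ x ∈ l, ν x ≤ K) :
    (l.map ν).sum ≤ l.length * K := by
  have := List.sum_le_card_nsmul (l.map ν) K (by simpa using h)
  simpa [mul_comm] using this

theorem telescope_prod {G : Type*} [Group G] (g : ℕ → G) (L : ℕ) :
    ((List.range L).map (fun i => (g i)⁻¹ * g (i + 1))).prod = (g 0)⁻¹ * g L := by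
  induction L with
  | zero => simp
  | succ L ih => rw [List.range_succ, List.map_append, List.prod_append, ih]; simp [mul_assoc]

set_option maxHeartbeats 1000000 in
/-- For `n ≥ 2`, every finitely generated subgroup `H` of
`G = F_n × ℤ` (the direct product of the free group of rank `n` with the infinite
cyclic group) is undistorted in `G`. -/
theorem freeGroup_prod_int_subgroups_undistorted (n : ℕ) (hn : 2 ≤ n)
    (H : Subgroup (FreeGroup (Fin n) × Multiplicative ℤ)) (hfg : H.FG)
    (S : Finset (FreeGroup (Fin n) × Multiplicative ℤ))
    (hS : Subgroup.closure (S : Set (FreeGroup (Fin n) × Multiplicative ℤ)) = ⊤)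
    (B : Finset (FreeGroup (Fin n) × Multiplicative ℤ))
    (hB : Subgroup.closure (B : Set (FreeGroup (Fin n) × Multiplicative ℤ)) = H) :
    ∃ C : ℕ, 0 < C ∧ ∀ h ∈ H,
      wordLength (B : Set (FreeGroup (Fin n) × Multiplicative ℤ)) h ≤
        C * wordLength (S : Set (FreeGroup (Fin n) × Multiplicative ℤ)) h + C := by
  classical
  let π : FreeGroup (Fin n) × Multiplicative ℤ →* FreeGroup (Fin n) := MonoidHom.fst _ _
  set sb : Set (FreeGroup (Fin n)) :=
    Prod.fst '' (B : Set (FreeGroup (Fin n) × Multiplicative ℤ)) with hsbdef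
  have hP : Subgroup.closure sb = H.map π := by
    rw [← hB, MonoidHom.map_closure]
    rfl
  have hsb : sb.Finite := B.finite_toSet.image _
  have hT : (gpPrefixes sb).Finite := gpPrefixes_finite hsb
  set F0 : Set (FreeGroup (Fin n)) :=
    (fun x : FreeGroup (Fin n) × ((Fin n × Bool) × FreeGroup (Fin n)) =>
      x.1 * FreeGroup.mk [x.2.1] * x.2.2⁻¹) ''
      (gpPrefixes sb ×ˢ ((Set.univ : Set (Fin n × Bool)) ×ˢ gpPrefixes sb)) with hF0def
  have hF0 : F0.Finite := ((hT.prod (Set.finite_univ.prod hT))).image _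
  set A0 : Set (FreeGroup (Fin n)) := F0 ∩ ↑(Subgroup.closure sb) with hA0def
  have hA0 : A0.Finite := hF0.inter_of_left _
  -- a lifting map from the projection of H back to H
  have hmapex : ∀ c : FreeGroup (Fin n), ∃ g : FreeGroup (Fin n) × Multiplicative ℤ,
      c ∈ Subgroup.closure sb → g ∈ H ∧ g.1 = c := by
    intro c
    by_cases hc : c ∈ Subgroup.closure sb
    · rw [hP] at hc
      obtain ⟨g, hg, he⟩ := Subgroup.mem_map.mp hc
      exact ⟨g, fun _ => ⟨hg, he⟩⟩
    · exact ⟨1, fun hcc => absurd hcc hc⟩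
  choose lift hlift using hmapex
  -- the central kernel
  set KZ : AddSubgroup ℤ :=
    { carrier := {z : ℤ | ((1 : FreeGroup (Fin n)), Multiplicative.ofAdd z) ∈ H}
      zero_mem' := by
        have h0 : ((1 : FreeGroup (Fin n)), Multiplicative.ofAdd (0 : ℤ))
            = (1 : FreeGroup (Fin n) × Multiplicative ℤ) := rfl
        simp only [Set.mem_setOf_eq, h0]
        exact H.one_mem
      add_mem' := by
        intro a b ha hb
        have h0 : ((1 : FreeGroup (Fin n)), Multiplicative.ofAdd (a + b))
            = ((1 : FreeGroup (Fin n)), Multiplicative.ofAdd a) *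
              ((1 : FreeGroup (Fin n)), Multiplicative.ofAdd b) := by
          simp [Prod.ext_iff, ofAdd_add]
        simp only [Set.mem_setOf_eq, h0]
        exact H.mul_mem ha hb
      neg_mem' := by
        intro a ha
        have h0 : ((1 : FreeGroup (Fin n)), Multiplicative.ofAdd (-a))
            = ((1 : FreeGroup (Fin n)), Multiplicative.ofAdd a)⁻¹ := by
          simp [Prod.ext_iff, ofAdd_neg]
        simp only [Set.mem_setOf_eq, h0]
        exact H.inv_mem ha } with hKZdef
  have hKZmem : ∀ z : ℤ, z ∈ KZ ↔ ((1 : FreeGroup (Fin n)), Multiplicative.ofAdd z) ∈ H :=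
    fun z => Iff.rfl
  obtain ⟨m, hm⟩ := Int.subgroup_cyclic KZ
  set e : FreeGroup (Fin n) × Multiplicative ℤ :=
    ((1 : FreeGroup (Fin n)), Multiplicative.ofAdd m) with hedef
  have he : e ∈ H := by
    have hmKZ : m ∈ KZ := hm ▸ AddSubgroup.subset_closure rfl
    exact (hKZmem m).mp hmKZ
  -- the finite pool of generators of H we shall use
  set E : Set (FreeGroup (Fin n) × Multiplicative ℤ) := lift '' A0 ∪ {e, e⁻¹} with hEdef
  have hE : E.Finite := (hA0.image _).union ((Set.finite_singleton _).insert _)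
  have hEH : ∀ x ∈ E, x ∈ H := by
    rintro x (⟨c, hc, rfl⟩ | hx)
    · exact (hlift c hc.2).1
    · rcases hx with rfl | rfl
      · exact he
      · exact H.inv_mem he
  set μ : FreeGroup (Fin n) × Multiplicative ℤ → ℕ :=
    fun x => (Multiplicative.toAdd x.2).natAbs with hμdef
  set ν : FreeGroup (Fin n) × Multiplicative ℤ → ℕ :=
    fun x => FreeGroup.norm x.1 + μ x with hνdef
  obtain ⟨M, hM⟩ :=
    (hE.image (wordLength (B : Set (FreeGroup (Fin n) × Multiplicative ℤ)))).bddAbove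
  obtain ⟨Z, hZ⟩ := (hE.image μ).bddAbove
  obtain ⟨K₀, hK₀⟩ := (S.finite_toSet.image ν).bddAbove
  have hν1 : ν 1 = 0 := by simp [hνdef, hμdef, FreeGroup.norm_one]
  have hνsub : ∀ x y : FreeGroup (Fin n) × Multiplicative ℤ, ν (x * y) ≤ ν x + ν y := by
    intro x y
    have h1 := FreeGroup.norm_mul_le x.1 y.1
    have h2 := Int.natAbs_add_le (Multiplicative.toAdd x.2) (Multiplicative.toAdd y.2)
    have e1 : (x * y).1 = x.1 * y.1 := rfl
    have e2 : Multiplicative.toAdd (x * y).2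
        = Multiplicative.toAdd x.2 + Multiplicative.toAdd y.2 := rfl
    simp only [hνdef, hμdef, e1, e2]
    omega
  have hνinv : ∀ x : FreeGroup (Fin n) × Multiplicative ℤ, ν x⁻¹ = ν x := by
    intro x
    have e1 : (x⁻¹).1 = x.1⁻¹ := rfl
    have e2 : Multiplicative.toAdd (x⁻¹).2 = -Multiplicative.toAdd x.2 := rfl
    simp only [hνdef, hμdef, e1, e2, FreeGroup.norm_inv_eq, Int.natAbs_neg]
  have hμ1 : μ 1 = 0 := by simp [hμdef]
  have hμsub : ∀ x y : FreeGroup (Fin n) × Multiplicative ℤ, μ (x * y) ≤ μ x + μ y :=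
    fun x y => Int.natAbs_add_le _ _
  refine ⟨M * (1 + Z) * K₀ + 1, Nat.succ_pos _, ?_⟩
  intro h hH
  -- upper bound for the geometry of h in terms of its S-word length
  have hhS : h ∈ Subgroup.closure (S : Set (FreeGroup (Fin n) × Multiplicative ℤ)) := by
    rw [hS]; trivial
  have hSbound : ν h ≤ K₀ * wordLength (S : Set (FreeGroup (Fin n) × Multiplicative ℤ)) h := by
    obtain ⟨ls, hls1, hls2, hls3⟩ := exists_wordLength_rep hhS
    calc ν h = ν ls.prod := by rw [hls3]
      _ ≤ (ls.map ν).sum := subadd_listprod ν hν1 hνsub ls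
      _ ≤ ls.length * K₀ := map_sum_le ν (fun x hx => by
          rcases hls1 x hx with h' | h'
          · exact hK₀ (Set.mem_image_of_mem ν h')
          · have := hK₀ (Set.mem_image_of_mem ν h')
            rwa [hνinv] at this)
      _ = K₀ * wordLength (S : Set (FreeGroup (Fin n) × Multiplicative ℤ)) h := by
          rw [hls2]; ring
  -- decompose the free part of h as a product of elements of A0
  set w : FreeGroup (Fin n) := h.1 with hwdef
  have hw : w ∈ Subgroup.closure sb := by
    rw [hP]; exact Subgroup.mem_map.mpr ⟨h, hH, rfl⟩
  set L : ℕ := w.toWord.length with hLdef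
  choose tf htf1 htf2 using fun i => prefix_coset sb hw i
  set t : ℕ → FreeGroup (Fin n) := fun i => if i = 0 ∨ L ≤ i then 1 else tf i with htdef
  set gg : ℕ → FreeGroup (Fin n) :=
    fun i => FreeGroup.mk (w.toWord.take i) * (t i)⁻¹ with hggdef
  have htT : ∀ i, t i ∈ gpPrefixes sb := by
    intro i
    by_cases hc : i = 0 ∨ L ≤ i
    · simp only [htdef, if_pos hc]
      exact one_mem_gpPrefixes sb
    · simp only [htdef, if_neg hc]
      exact htf1 i
  have hgP : ∀ i, gg i ∈ Subgroup.closure sb := by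
    intro i
    by_cases hc : i = 0 ∨ L ≤ i
    · simp only [hggdef, htdef, if_pos hc]
      rcases hc with rfl | hc
      · have : FreeGroup.mk (w.toWord.take 0) = 1 := by
          simp [FreeGroup.one_eq_mk]
        rw [this]
        simpa using Subgroup.one_mem _
      · have : FreeGroup.mk (w.toWord.take i) = w := by
          rw [List.take_of_length_le hc, FreeGroup.mk_toWord]
        rw [this]
        simpa using hw
    · simp only [hggdef, htdef, if_neg hc]
      exact htf2 i
  set lw : List (FreeGroup (Fin n)) :=
    (List.range L).map (fun i => (gg i)⁻¹ * gg (i + 1)) with hlwdef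
  have ht0 : t 0 = 1 := by simp [htdef]
  have htL : t L = 1 := by simp [htdef]
  have hgg0 : gg 0 = 1 := by simp [hggdef, ht0, FreeGroup.one_eq_mk]
  have hggL : gg L = w := by
    simp only [hggdef, htL, inv_one, mul_one]
    rw [hLdef, List.take_length, FreeGroup.mk_toWord]
  have hlw_prod : lw.prod = w := by
    rw [hlwdef, telescope_prod gg L, hgg0, hggL]
    simp
  have hlw_mem : ∀ x ∈ lw, x ∈ A0 := by
    intro x hx
    rw [hlwdef, List.mem_map] at hx
    obtain ⟨i, hi, rfl⟩ := hx
    rw [List.mem_range] at hi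
    constructor
    · -- membership in F0
      have hget : w.toWord.take (i + 1) = w.toWord.take i ++ [w.toWord.get ⟨i, hi⟩] := by
        rw [List.take_succ]
        simp [List.getElem?_eq_getElem hi]
      refine ⟨(t i, (w.toWord.get ⟨i, hi⟩, t (i + 1))),
        ⟨htT i, ⟨Set.mem_univ _, htT (i + 1)⟩⟩, ?_⟩
      simp only [hggdef, hget]
      rw [show w.toWord.take i ++ [w.toWord.get ⟨i, hi⟩]
          = w.toWord.take i ++ [w.toWord.get ⟨i, hi⟩] from rfl, ← FreeGroup.mul_mk]
      group
    · exact Subgroup.mul_mem _ (Subgroup.inv_mem _ (hgP i)) (hgP (i + 1))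
  -- lift to H
  set lG : List (FreeGroup (Fin n) × Multiplicative ℤ) := lw.map lift with hlGdef
  have hlG_len : lG.length = L := by simp [hlGdef, hlwdef]
  have hlG_mem : ∀ x ∈ lG, x ∈ E := by
    intro x hx
    rw [hlGdef, List.mem_map] at hx
    obtain ⟨c, hc, rfl⟩ := hx
    exact Or.inl ⟨c, hlw_mem c hc, rfl⟩
  have hlG_H : ∀ x ∈ lG, x ∈ H := fun x hx => hEH x (hlG_mem x hx)
  have hlGprod_H : lG.prod ∈ H := Subgroup.list_prod_mem _ hlG_H
  have hlG_fst : (lG.prod).1 = w := by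
    have h1 : π lG.prod = (lG.map π).prod := MonoidHom.map_list_prod π lG
    have h2 : lG.map π = lw := by
      rw [hlGdef, List.map_map]
      conv_rhs => rw [← List.map_id lw]
      exact List.map_congr_left (fun c hc => (hlift c (hlw_mem c hc).2).2)
    have : π lG.prod = w := by rw [h1, h2, hlw_prod]
    exact this
  -- the central correction
  set d : ℤ := Multiplicative.toAdd h.2 - Multiplicative.toAdd (lG.prod).2 with hddef
  have hdK : d ∈ KZ := by
    rw [hKZmem]
    have hde : ((1 : FreeGroup (Fin n)), Multiplicative.ofAdd d) = h * (lG.prod)⁻¹ := by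
      refine Prod.ext ?_ ?_
      · show (1 : FreeGroup (Fin n)) = h.1 * ((lG.prod).1)⁻¹
        rw [hlG_fst, ← hwdef, mul_inv_cancel]
      · show Multiplicative.ofAdd d = h.2 * ((lG.prod).2)⁻¹
        apply Multiplicative.toAdd.injective
        simp [hddef, sub_eq_add_neg]
    rw [hde]
    exact H.mul_mem hH (H.inv_mem hlGprod_H)
  obtain ⟨k0, hk0⟩ : ∃ k : ℤ, k • m = d := AddSubgroup.mem_closure_singleton.mp (hm ▸ hdK)
  set k : ℤ := if d = 0 then 0 else k0 with hkdef
  have hkm : k * m = d := by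
    by_cases hd : d = 0
    · simp [hkdef, hd]
    · rw [hkdef, if_neg hd, ← smul_eq_mul]; exact hk0
  have hkabs : k.natAbs ≤ d.natAbs := by
    by_cases hd : d = 0
    · simp [hkdef, hd]
    · have hm0 : m ≠ 0 := by
        intro h0
        rw [h0, mul_zero] at hkm
        exact hd hkm.symm
      calc k.natAbs ≤ k.natAbs * m.natAbs :=
            Nat.le_mul_of_pos_right _ (Int.natAbs_pos.mpr hm0)
        _ = d.natAbs := by rw [← Int.natAbs_mul, hkm]
  -- the full factorization of h
  set e' : FreeGroup (Fin n) × Multiplicative ℤ := if 0 ≤ k then e else e⁻¹ with he'def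
  have he'E : e' ∈ E := by
    rw [he'def]
    by_cases hk' : 0 ≤ k
    · rw [if_pos hk']; exact Or.inr (Or.inl rfl)
    · rw [if_neg hk']; exact Or.inr (Or.inr rfl)
  have he'pow : e' ^ k.natAbs = e ^ k := by
    by_cases hk' : 0 ≤ k
    · rw [he'def, if_pos hk', ← zpow_natCast, Int.natAbs_of_nonneg hk']
    · rw [he'def, if_neg hk', inv_pow, ← zpow_natCast, ← zpow_neg]
      congr 1
      omega
  have hek : e ^ k = ((1 : FreeGroup (Fin n)), Multiplicative.ofAdd d) := by
    refine Prod.ext ?_ ?_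
    · show ((1 : FreeGroup (Fin n)) ^ k) = 1
      exact one_zpow k
    · show (Multiplicative.ofAdd m) ^ k = Multiplicative.ofAdd d
      rw [← ofAdd_zsmul, smul_eq_mul, hkm]
  set lfull : List (FreeGroup (Fin n) × Multiplicative ℤ) :=
    lG ++ List.replicate k.natAbs e' with hlfulldef
  have hfull_prod : lfull.prod = h := by
    rw [hlfulldef, List.prod_append, List.prod_replicate, he'pow, hek]
    refine Prod.ext ?_ ?_
    · show (lG.prod).1 * 1 = h.1
      rw [mul_one, hlG_fst]
    · show (lG.prod).2 * Multiplicative.ofAdd d = h.2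
      apply Multiplicative.toAdd.injective
      simp [hddef]
  have hfull_E : ∀ x ∈ lfull, x ∈ E := by
    intro x hx
    rw [hlfulldef, List.mem_append] at hx
    rcases hx with hx | hx
    · exact hlG_mem x hx
    · rw [List.eq_of_mem_replicate hx]; exact he'E
  have hfull_H : ∀ x ∈ lfull,
      x ∈ Subgroup.closure (B : Set (FreeGroup (Fin n) × Multiplicative ℤ)) := by
    intro x hx
    rw [hB]
    exact hEH x (hfull_E x hx)
  -- B-side upper bound
  have hBbound : wordLength (B : Set (FreeGroup (Fin n) × Multiplicative ℤ)) h
      ≤ (L + k.natAbs) * M := by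
    calc wordLength (B : Set (FreeGroup (Fin n) × Multiplicative ℤ)) h
        = wordLength (B : Set (FreeGroup (Fin n) × Multiplicative ℤ)) lfull.prod := by
          rw [hfull_prod]
      _ ≤ (lfull.map (wordLength (B : Set (FreeGroup (Fin n) × Multiplicative ℤ)))).sum :=
          wordLength_listprod_le _ hfull_H
      _ ≤ lfull.length * M := map_sum_le _ (fun x hx =>
          hM (Set.mem_image_of_mem _ (hfull_E x hx)))
      _ = (L + k.natAbs) * M := by
          rw [hlfulldef, List.length_append, List.length_replicate, hlG_len]
  -- bound k.natAbs
  have hμlG : μ lG.prod ≤ L * Z := by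
    calc μ lG.prod ≤ (lG.map μ).sum := subadd_listprod μ hμ1 hμsub lG
      _ ≤ lG.length * Z := map_sum_le μ (fun x hx =>
          hZ (Set.mem_image_of_mem μ (hlG_mem x hx)))
      _ = L * Z := by rw [hlG_len]
  have hdabs : d.natAbs ≤ μ h + L * Z := by
    have h3 : d.natAbs ≤ μ h + μ lG.prod := by
      rw [hddef]
      exact Int.natAbs_sub_le _ _
    omega
  have hLν : L + μ h = ν h := rfl
  -- final arithmetic
  have hstep1 : L + k.natAbs ≤ (1 + Z) * ν h := by
    have h1 : k.natAbs ≤ μ h + L * Z := le_trans hkabs hdabs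
    have h2 : L + k.natAbs ≤ L + μ h + L * Z := by omega
    calc L + k.natAbs ≤ L + μ h + L * Z := h2
      _ ≤ (L + μ h) + (L + μ h) * Z := by
          have : L * Z ≤ (L + μ h) * Z := Nat.mul_le_mul_right _ (by omega)
          omega
      _ = (1 + Z) * (L + μ h) := by ring
      _ = (1 + Z) * ν h := by rw [hLν]
  calc wordLength (B : Set (FreeGroup (Fin n) × Multiplicative ℤ)) h
      ≤ (L + k.natAbs) * M := hBbound
    _ ≤ ((1 + Z) * ν h) * M := Nat.mul_le_mul_right _ hstep1
    _ ≤ ((1 + Z) * (K₀ * wordLength (S : Set (FreeGroup (Fin n) × Multiplicative ℤ)) h)) * M :=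
        Nat.mul_le_mul_right _ (Nat.mul_le_mul_left _ hSbound)
    _ = (M * (1 + Z) * K₀) * wordLength (S : Set (FreeGroup (Fin n) × Multiplicative ℤ)) h := by
        ring
    _ ≤ (M * (1 + Z) * K₀ + 1) * wordLength (S : Set (FreeGroup (Fin n) × Multiplicative ℤ)) h
        + (M * (1 + Z) * K₀ + 1) := by
        have h1 : (M * (1 + Z) * K₀) * wordLength (S : Set (FreeGroup (Fin n) × Multiplicative ℤ)) h
            ≤ (M * (1 + Z) * K₀ + 1) * wordLength (S : Set (FreeGroup (Fin n) × Multiplicative ℤ)) h :=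
          Nat.mul_le_mul_right _ (Nat.le_add_right _ 1)
        exact le_trans h1 (Nat.le_add_right _ _)
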